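/- For every read-once AND-OR formula φ on N variables there exists a positive edge-weight function c on E(G_φ) such that W_+(P_{G_φ,c}) · W_-(P_{G_φ,c}) ≤ N, where W_+ = max over 1-inputs x of (1/2)R_{s,t}(G_φ(x),c) and W_- = max over 0-inputs x of 2R_{s',t'}(G'_φ(x),c'). Equivalently, max_{x: φ(x)=1} R_{s,t}(G_φ(x),c) · max_{x: φ(x)=0} R_{s',t'}(G'_φ(x),c') ≤ 4N for some c. -/

import Mathlib

open scoped ENNReal

namespace STConn

variable {V E : Type*}

/-- `v` is an endpoint of edge `e`. -/
def Touches (ends : E → V × V) (e : E) (v : V) : Prop :=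
  (ends e).1 = v ∨ (ends e).2 = v

/-- Net flow out of vertex `v` for an edge-valued function `θ` (value along the
fixed orientation of each edge). -/
noncomputable def netflow [Fintype E] [DecidableEq V] (ends : E → V × V) (θ : E → ℝ) (v : V) : ℝ :=
  ∑ e, θ e * ((if (ends e).1 = v then (1:ℝ) else 0) - (if (ends e).2 = v then 1 else 0))

/-- `θ` is a unit `st`-flow: net flow `+1` at `s`, `-1` at `t`, `0` elsewhere. -/
def IsUnitFlow [Fintype E] [DecidableEq V] (ends : E → V × V) (s t : V) (θ : E → ℝ) : Prop :=
  ∀ v, netflow ends θ v = (if v = s then (1:ℝ) else 0) - (if v = t then 1 else 0)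

/-- Energy of a flow with respect to edge weights `c`. -/
noncomputable def energy [Fintype E] (c : E → ℝ) (θ : E → ℝ) : ℝ :=
  ∑ e, θ e ^ 2 / c e

/-- Effective resistance between `s` and `t`, restricted to flows supported on `S`
(taking value `∞` if no unit `st`-flow supported on `S` exists). -/
noncomputable def effResOn [Fintype E] [DecidableEq V] (ends : E → V × V) (c : E → ℝ)
    (S : Set E) (s t : V) : ℝ≥0∞ :=
  ⨅ θ : {θ : E → ℝ // IsUnitFlow ends s t θ ∧ ∀ e ∉ S, θ e = 0},
    ENNReal.ofReal (energy c θ.1)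

/-- Effective resistance between `s` and `t` in the network `(ends, c)`. -/
noncomputable def effRes [Fintype E] [DecidableEq V] (ends : E → V × V) (c : E → ℝ)
    (s t : V) : ℝ≥0∞ :=
  effResOn ends c Set.univ s t

end STConn

namespace STConn

/-- Read-once AND-OR formulas on `N` variables (gates have fan-in `k+1`). -/
inductive Formula (N : ℕ) : Type where
  | var : Fin N → Formula N
  | and : (k : ℕ) → (Fin (k + 1) → Formula N) → Formula N
  | or : (k : ℕ) → (Fin (k + 1) → Formula N) → Formula N

namespace Formula

variable {N : ℕ}

/-- Evaluation of a formula on an input. -/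
def eval : Formula N → (Fin N → Bool) → Bool
  | .var i, x => x i
  | .and _ fs, x => (List.finRange _).all fun i => (fs i).eval x
  | .or _ fs, x => (List.finRange _).any fun i => (fs i).eval x

/-- The leaves of a formula; these index the edges of the graph `G_φ`. -/
def Leaves : Formula N → Type
  | .var _ => Unit
  | .and k fs => Σ i : Fin (k + 1), (fs i).Leaves
  | .or k fs => Σ i : Fin (k + 1), (fs i).Leaves

/-- The variable labelling a leaf. -/
def label : (φ : Formula N) → φ.Leaves → Fin N
  | .var i, _ => i
  | .and _ fs, ⟨i, l⟩ => (fs i).label l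
  | .or _ fs, ⟨i, l⟩ => (fs i).label l

/-- The internal (non-terminal) vertices of the series-parallel graph `G_φ`:
series composition (for `∧`) introduces `k` junction vertices. -/
def Inner : Formula N → Type
  | .var _ => Empty
  | .and k fs => (Σ i : Fin (k + 1), (fs i).Inner) ⊕ Fin k
  | .or k fs => Σ i : Fin (k + 1), (fs i).Inner

/-- The vertex set of `G_φ`: internal vertices plus the two terminals
(`Sum.inr true = s`, `Sum.inr false = t`). -/
abbrev Vert (φ : Formula N) : Type := φ.Inner ⊕ Bool

/-- Embedding the vertices of the `i`-th subgraph into a series composition. -/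
def vmapAnd (k : ℕ) (fs : Fin (k + 1) → Formula N) (i : Fin (k + 1)) :
    (fs i).Vert → (Formula.and k fs).Vert
  | .inl w => .inl (.inl ⟨i, w⟩)
  | .inr true =>
      if h : i.val = 0 then .inr true
      else .inl (.inr ⟨i.val - 1, by have := i.isLt; omega⟩)
  | .inr false =>
      if h : i.val = k then .inr false
      else .inl (.inr ⟨i.val, by have := i.isLt; omega⟩)

/-- Embedding the vertices of the `i`-th subgraph into a parallel composition. -/
def vmapOr (k : ℕ) (fs : Fin (k + 1) → Formula N) (i : Fin (k + 1)) :
    (fs i).Vert → (Formula.or k fs).Vert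
  | .inl w => .inl ⟨i, w⟩
  | .inr b => .inr b

/-- The endpoints of each edge (= leaf) of the series-parallel graph `G_φ`:
a variable is a single `st`-edge, `∧` composes the subgraphs in series, and
`∨` composes them in parallel. -/
def ends : (φ : Formula N) → φ.Leaves → φ.Vert × φ.Vert
  | .var _, _ => (.inr true, .inr false)
  | .and k fs, ⟨i, l⟩ =>
      (vmapAnd k fs i ((fs i).ends l).1, vmapAnd k fs i ((fs i).ends l).2)
  | .or k fs, ⟨i, l⟩ =>
      (vmapOr k fs i ((fs i).ends l).1, vmapOr k fs i ((fs i).ends l).2)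

/-- The dual formula: swap every `∧` with `∨`. -/
def dualF : Formula N → Formula N
  | .var i => .var i
  | .and k fs => .or k fun i => dualF (fs i)
  | .or k fs => .and k fun i => dualF (fs i)

def leavesFintype : (φ : Formula N) → Fintype φ.Leaves
  | .var _ => inferInstanceAs (Fintype Unit)
  | .and k fs =>
      letI := fun i => leavesFintype (fs i)
      inferInstanceAs (Fintype (Σ i : Fin (k + 1), (fs i).Leaves))
  | .or k fs =>
      letI := fun i => leavesFintype (fs i)
      inferInstanceAs (Fintype (Σ i : Fin (k + 1), (fs i).Leaves))

instance (φ : Formula N) : Fintype φ.Leaves := leavesFintype φ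

def innerDecEq : (φ : Formula N) → DecidableEq φ.Inner
  | .var _ => fun a => a.elim
  | .and k fs =>
      letI := fun i => innerDecEq (fs i)
      inferInstanceAs (DecidableEq ((Σ i : Fin (k + 1), (fs i).Inner) ⊕ Fin k))
  | .or k fs =>
      letI := fun i => innerDecEq (fs i)
      inferInstanceAs (DecidableEq (Σ i : Fin (k + 1), (fs i).Inner))

instance (φ : Formula N) : DecidableEq φ.Inner := innerDecEq φ

instance (φ : Formula N) : DecidableEq φ.Vert :=
  inferInstanceAs (DecidableEq (φ.Inner ⊕ Bool))

/-- The source terminal `s` of `G_φ`. -/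
def src (φ : Formula N) : φ.Vert := .inr true

/-- The sink terminal `t` of `G_φ`. -/
def snk (φ : Formula N) : φ.Vert := .inr false


/-! ### Auxiliary development -/

section FlowTest

/-- Test-function characterization of unit flows. -/
lemma isUnitFlow_iff {V E : Type*} [Fintype E] [DecidableEq V] (ends : E → V × V)
    (s t : V) (θ : E → ℝ) :
    IsUnitFlow ends s t θ ↔
      ∀ g : V → ℝ, ∑ e, θ e * (g (ends e).1 - g (ends e).2) = g s - g t := by
  classical
  constructor
  · intro h g
    set T : Finset V :=
      ((Finset.univ.image fun e => (ends e).1) ∪ (Finset.univ.image fun e => (ends e).2))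
        ∪ {s, t} with hT
    have hs : s ∈ T := by simp [hT]
    have ht : t ∈ T := by simp [hT]
    have h1 : ∀ e, (ends e).1 ∈ T := fun e => by
      simp only [hT, Finset.mem_union, Finset.mem_image]
      exact Or.inl (Or.inl ⟨e, Finset.mem_univ e, rfl⟩)
    have h2 : ∀ e, (ends e).2 ∈ T := fun e => by
      simp only [hT, Finset.mem_union, Finset.mem_image]
      exact Or.inl (Or.inr ⟨e, Finset.mem_univ e, rfl⟩)
    calc ∑ e, θ e * (g (ends e).1 - g (ends e).2)
        = ∑ e, ∑ v ∈ T, g v * (θ e * ((if (ends e).1 = v then (1:ℝ) else 0)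
            - if (ends e).2 = v then 1 else 0)) := by
          refine Finset.sum_congr rfl fun e _ => ?_
          have e1 : (∑ v ∈ T, if (ends e).1 = v then g v else 0) = g (ends e).1 := by
            rw [Finset.sum_ite_eq, if_pos (h1 e)]
          have e2 : (∑ v ∈ T, if (ends e).2 = v then g v else 0) = g (ends e).2 := by
            rw [Finset.sum_ite_eq, if_pos (h2 e)]
          calc θ e * (g (ends e).1 - g (ends e).2)
              = (∑ v ∈ T, if (ends e).1 = v then g v else 0) * θ e
                - (∑ v ∈ T, if (ends e).2 = v then g v else 0) * θ e := by
                  rw [e1, e2]; ring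
            _ = ∑ v ∈ T, g v * (θ e * ((if (ends e).1 = v then (1:ℝ) else 0)
                  - if (ends e).2 = v then 1 else 0)) := by
                  rw [Finset.sum_mul, Finset.sum_mul, ← Finset.sum_sub_distrib]
                  refine Finset.sum_congr rfl fun v _ => ?_
                  simp only [mul_sub, mul_ite, ite_mul, mul_one, mul_zero, zero_mul]
      _ = ∑ v ∈ T, g v * netflow ends θ v := by
          rw [Finset.sum_comm]
          exact Finset.sum_congr rfl fun v _ => by rw [netflow, Finset.mul_sum]
      _ = ∑ v ∈ T, ((if v = s then g v else 0) - (if v = t then g v else 0)) := by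
          refine Finset.sum_congr rfl fun v _ => ?_
          rw [h v]
          simp only [mul_sub, mul_ite, mul_one, mul_zero]
      _ = g s - g t := by
          rw [Finset.sum_sub_distrib, Finset.sum_ite_eq' T s g, Finset.sum_ite_eq' T t g,
            if_pos hs, if_pos ht]
  · intro h v
    have h2 : netflow ends θ v
        = (if s = v then (1:ℝ) else 0) - (if t = v then 1 else 0) :=
      h (fun w => if w = v then (1:ℝ) else 0)
    rw [h2]
    exact congrArg₂ (· - ·) (if_congr eq_comm rfl rfl) (if_congr eq_comm rfl rfl)

end FlowTest

/-- The canonical equivalence between the leaves of a formula and of its dual. -/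
def dEquiv : (φ : Formula N) → φ.Leaves ≃ (dualF φ).Leaves
  | .var _ => Equiv.refl _
  | .and k fs => Equiv.sigmaCongrRight fun i => dEquiv (fs i)
  | .or k fs => Equiv.sigmaCongrRight fun i => dEquiv (fs i)

lemma label_dEquiv_symm : ∀ (φ : Formula N) (l' : (dualF φ).Leaves),
    φ.label ((dEquiv φ).symm l') = (dualF φ).label l'
  | .var _, _ => rfl
  | .and _ fs, ⟨i, l'⟩ => label_dEquiv_symm (fs i) l'
  | .or _ fs, ⟨i, l'⟩ => label_dEquiv_symm (fs i) l'

lemma leaves_nonempty : ∀ φ : Formula N, Nonempty φ.Leaves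
  | .var _ => ⟨()⟩
  | .and _ fs => (leaves_nonempty (fs 0)).elim fun l => ⟨⟨0, l⟩⟩
  | .or _ fs => (leaves_nonempty (fs 0)).elim fun l => ⟨⟨0, l⟩⟩

lemma card_leaves_pos (φ : Formula N) : 0 < Fintype.card φ.Leaves :=
  @Fintype.card_pos _ _ (leaves_nonempty φ)

lemma sum_leaves_sigma {k : ℕ} (gs : Fin (k + 1) → Formula N)
    (F : (Σ i, (gs i).Leaves) → ℝ) :
    ∑ e : (Σ i, (gs i).Leaves), F e = ∑ i, ∑ l : (gs i).Leaves, F ⟨i, l⟩ := by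
  rw [← Finset.univ_sigma_univ, Finset.sum_sigma]

lemma sum_leaves_and {k : ℕ} (gs : Fin (k + 1) → Formula N)
    (F : (Formula.and k gs).Leaves → ℝ) :
    ∑ e, F e = ∑ i, ∑ l : (gs i).Leaves, F ⟨i, l⟩ :=
  sum_leaves_sigma gs F

lemma sum_leaves_or {k : ℕ} (gs : Fin (k + 1) → Formula N)
    (F : (Formula.or k gs).Leaves → ℝ) :
    ∑ e, F e = ∑ i, ∑ l : (gs i).Leaves, F ⟨i, l⟩ :=
  sum_leaves_sigma gs F

lemma card_leaves_and {k : ℕ} (gs : Fin (k + 1) → Formula N) :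
    Fintype.card (Formula.and k gs).Leaves = ∑ i, Fintype.card (gs i).Leaves :=
  Fintype.card_sigma

lemma card_leaves_or {k : ℕ} (gs : Fin (k + 1) → Formula N) :
    Fintype.card (Formula.or k gs).Leaves = ∑ i, Fintype.card (gs i).Leaves :=
  Fintype.card_sigma

lemma eval_and_iff {k : ℕ} (fs : Fin (k + 1) → Formula N) (x : Fin N → Bool) :
    (Formula.and k fs).eval x = true ↔ ∀ i, (fs i).eval x = true := by
  simp [eval, List.all_eq_true, List.mem_finRange]

lemma eval_or_iff {k : ℕ} (fs : Fin (k + 1) → Formula N) (x : Fin N → Bool) :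
    (Formula.or k fs).eval x = true ↔ ∃ i, (fs i).eval x = true := by
  simp [eval, List.any_eq_true, List.mem_finRange]

/-- The junction vertices of a series composition, as a function of `ℕ`. -/
def junc {k : ℕ} (fs : Fin (k + 1) → Formula N) (j : ℕ) : (Formula.and k fs).Vert :=
  if h0 : j = 0 then .inr true
  else if h : j ≤ k then .inl (.inr ⟨j - 1, by omega⟩)
  else .inr false

lemma vmapAnd_src {k : ℕ} (fs : Fin (k + 1) → Formula N) (i : Fin (k + 1)) :
    vmapAnd k fs i (.inr true) = junc fs i.val := by
  rcases Nat.eq_zero_or_pos i.val with h | h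
  · simp [vmapAnd, junc, h]
  · have h0 : i.val ≠ 0 := by omega
    have hik : i.val ≤ k := by have := i.isLt; omega
    simp [vmapAnd, junc, h0, hik]

lemma vmapAnd_snk {k : ℕ} (fs : Fin (k + 1) → Formula N) (i : Fin (k + 1)) :
    vmapAnd k fs i (.inr false) = junc fs (i.val + 1) := by
  by_cases h : i.val = k
  · have : ¬ (i.val + 1 ≤ k) := by omega
    simp [vmapAnd, junc, h, this]
  · have hik : i.val + 1 ≤ k := by have := i.isLt; omega
    simp [vmapAnd, junc, h, hik]

/-- Series composition of unit flows. -/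
lemma isUnitFlow_and {k : ℕ} (gs : Fin (k + 1) → Formula N)
    (θs : ∀ i, (gs i).Leaves → ℝ)
    (h : ∀ i, IsUnitFlow (gs i).ends (gs i).src (gs i).snk (θs i)) :
    IsUnitFlow (Formula.and k gs).ends (Formula.and k gs).src (Formula.and k gs).snk
      (fun e => θs e.1 e.2) := by
  rw [isUnitFlow_iff]
  intro g
  have hbr : ∀ i, ∑ l : (gs i).Leaves, θs i l *
      (g (vmapAnd k gs i ((gs i).ends l).1) - g (vmapAnd k gs i ((gs i).ends l).2))
      = g (junc gs i.val) - g (junc gs (i.val + 1)) := by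
    intro i
    have h' := (isUnitFlow_iff (gs i).ends (gs i).src (gs i).snk (θs i)).mp (h i)
      (fun v => g (vmapAnd k gs i v))
    refine h'.trans ?_
    show g (vmapAnd k gs i (Sum.inr true)) - g (vmapAnd k gs i (Sum.inr false)) = _
    rw [vmapAnd_src, vmapAnd_snk]
  calc ∑ e : (Formula.and k gs).Leaves, (fun e : (Formula.and k gs).Leaves => θs e.1 e.2) e *
        (g ((Formula.and k gs).ends e).1 - g ((Formula.and k gs).ends e).2)
      = ∑ i, ∑ l : (gs i).Leaves, θs i l *
          (g (vmapAnd k gs i ((gs i).ends l).1) - g (vmapAnd k gs i ((gs i).ends l).2)) :=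
        sum_leaves_and gs _
    _ = ∑ i, (g (junc gs i.val) - g (junc gs (i.val + 1))) :=
        Finset.sum_congr rfl fun i _ => hbr i
    _ = ∑ j ∈ Finset.range (k + 1), (g (junc gs j) - g (junc gs (j + 1))) :=
        Fin.sum_univ_eq_sum_range (fun j => g (junc gs j) - g (junc gs (j + 1))) (k + 1)
    _ = g (junc gs 0) - g (junc gs (k + 1)) :=
        Finset.sum_range_sub' (fun j => g (junc gs j)) (k + 1)
    _ = g (Formula.and k gs).src - g (Formula.and k gs).snk := by
        have h1 : junc gs 0 = (Formula.and k gs).src := by simp [junc]; rfl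
        have h2 : junc gs (k + 1) = (Formula.and k gs).snk := by
          have : ¬ (k + 1 ≤ k) := by omega
          simp [junc, this]; rfl
        rw [h1, h2]

/-- Parallel composition: a unit flow through one branch. -/
lemma isUnitFlow_or {k : ℕ} (gs : Fin (k + 1) → Formula N) (i : Fin (k + 1))
    (θ : (gs i).Leaves → ℝ)
    (h : IsUnitFlow (gs i).ends (gs i).src (gs i).snk θ) :
    IsUnitFlow (Formula.or k gs).ends (Formula.or k gs).src (Formula.or k gs).snk
      (fun e => Pi.single (M := fun j => (gs j).Leaves → ℝ) i θ e.1 e.2) := by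
  rw [isUnitFlow_iff]
  intro g
  calc ∑ e : (Formula.or k gs).Leaves,
        (fun e : (Formula.or k gs).Leaves =>
          Pi.single (M := fun j => (gs j).Leaves → ℝ) i θ e.1 e.2) e *
        (g ((Formula.or k gs).ends e).1 - g ((Formula.or k gs).ends e).2)
      = ∑ j, ∑ l : (gs j).Leaves, (Pi.single (M := fun j => (gs j).Leaves → ℝ) i θ j l) *
          (g (vmapOr k gs j ((gs j).ends l).1) - g (vmapOr k gs j ((gs j).ends l).2)) :=
        sum_leaves_or gs _
    _ = ∑ l : (gs i).Leaves, θ l *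
          (g (vmapOr k gs i ((gs i).ends l).1) - g (vmapOr k gs i ((gs i).ends l).2)) := by
        refine (Fintype.sum_eq_single i fun j hji => ?_).trans ?_
        · simp [Pi.single_eq_of_ne hji]
        · simp [Pi.single_eq_same]
    _ = g (Formula.or k gs).src - g (Formula.or k gs).snk :=
        (isUnitFlow_iff (gs i).ends (gs i).src (gs i).snk θ).mp h
          (fun v => g (vmapOr k gs i v))
lemma effResOn_le_energy {V E : Type*} [Fintype E] [DecidableEq V] (ends : E → V × V)
    (c : E → ℝ) (S : Set E) (s t : V) (θ : E → ℝ) (h1 : IsUnitFlow ends s t θ)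
    (h2 : ∀ e ∉ S, θ e = 0) : effResOn ends c S s t ≤ ENNReal.ofReal (energy c θ) :=
  iInf_le (fun θ : {θ : E → ℝ // IsUnitFlow ends s t θ ∧ ∀ e ∉ S, θ e = 0} =>
    ENNReal.ofReal (energy c θ.1)) ⟨θ, h1, h2⟩

lemma energy_eq {E : Type*} [Fintype E] (c θ : E → ℝ) :
    energy c θ = ∑ e, θ e ^ 2 / c e := rfl

/-- Main inductive construction: weights achieving `W₊ = W₋ = √(#leaves)`. -/
lemma key (φ : Formula N) : ∃ c : φ.Leaves → ℝ,
    (∀ e, 0 < c e) ∧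
    (∀ x : Fin N → Bool, φ.eval x = true → ∃ θ : φ.Leaves → ℝ,
      IsUnitFlow φ.ends φ.src φ.snk θ ∧ (∀ l, ¬ x (φ.label l) = true → θ l = 0) ∧
      energy c θ ≤ Real.sqrt (Fintype.card φ.Leaves)) ∧
    (∀ x : Fin N → Bool, φ.eval x = false → ∃ θ : (dualF φ).Leaves → ℝ,
      IsUnitFlow (dualF φ).ends (dualF φ).src (dualF φ).snk θ ∧
      (∀ l, ¬ x ((dualF φ).label l) = false → θ l = 0) ∧
      energy (fun l => (c ((dEquiv φ).symm l))⁻¹) θ ≤ Real.sqrt (Fintype.card φ.Leaves)) := by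
  induction φ with
  | var i =>
    letI hu : Unique (Formula.var (N := N) i).Leaves := ⟨⟨()⟩, fun _ => rfl⟩
    have h1 : ∀ f : (Formula.var (N := N) i).Leaves → ℝ, ∑ e, f e = f () :=
      fun f => Fintype.sum_unique f
    have hcard : (Fintype.card (Formula.var (N := N) i).Leaves : ℝ) = 1 := by
      rw [Fintype.card_unique]; norm_num
    have hflow : IsUnitFlow (Formula.var (N := N) i).ends (Formula.var (N := N) i).src
        (Formula.var (N := N) i).snk (fun _ => (1:ℝ)) := by
      rw [isUnitFlow_iff]
      intro g
      rw [h1]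
      show 1 * (g (Sum.inr true) - g (Sum.inr false)) = g (Sum.inr true) - g (Sum.inr false)
      rw [one_mul]
    refine ⟨fun _ => 1, fun _ => one_pos, ?_, ?_⟩
    · intro x hx
      refine ⟨fun _ => 1, hflow, fun l hl => absurd hx hl, ?_⟩
      rw [energy_eq, h1, hcard, Real.sqrt_one]
      norm_num
    · intro x hx
      simp only [dualF]
      refine ⟨fun _ => 1, hflow, fun l hl => absurd hx hl, ?_⟩
      change ∑ e : (Formula.var (N := N) i).Leaves, (1:ℝ) ^ 2 / (1:ℝ)⁻¹ ≤ _
      rw [h1]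
      show (1:ℝ) ^ 2 / (1:ℝ)⁻¹ ≤ _
      rw [hcard, Real.sqrt_one]
      norm_num
  | and k fs ih =>
    choose cs hcs hprim hdual using ih
    have hni : ∀ i, 0 < ((Fintype.card (fs i).Leaves : ℝ)) :=
      fun i => Nat.cast_pos.mpr (card_leaves_pos (fs i))
    have hnsum : ((Fintype.card (Formula.and k fs).Leaves : ℝ))
        = ∑ i, ((Fintype.card (fs i).Leaves : ℝ)) := by
      rw [card_leaves_and]; push_cast; ring
    have hnpos : 0 < ((Fintype.card (Formula.and k fs).Leaves : ℝ)) :=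
      Nat.cast_pos.mpr (card_leaves_pos _)
    have hsq : ∀ i, 0 < Real.sqrt (Fintype.card (fs i).Leaves) :=
      fun i => Real.sqrt_pos.2 (hni i)
    have hsqn : 0 < Real.sqrt (Fintype.card (Formula.and k fs).Leaves) :=
      Real.sqrt_pos.2 hnpos
    set α : Fin (k+1) → ℝ := fun i =>
      Real.sqrt (Fintype.card (Formula.and k fs).Leaves)
        / Real.sqrt (Fintype.card (fs i).Leaves) with hα
    have hαpos : ∀ i, 0 < α i := fun i => div_pos hsqn (hsq i)
    refine ⟨fun e => α e.1 * cs e.1 e.2,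
      fun e => mul_pos (hαpos e.1) (hcs e.1 e.2), ?_, ?_⟩
    · -- primal: series composition
      intro x hx
      have hall : ∀ i, (fs i).eval x = true := (eval_and_iff fs x).mp hx
      choose θs hflow hsupp hen using fun i => hprim i x (hall i)
      refine ⟨fun e => θs e.1 e.2, isUnitFlow_and fs θs hflow, ?_, ?_⟩
      · rintro ⟨i, l⟩ hl
        exact hsupp i l hl
      · rw [energy_eq]
        refine (sum_leaves_and fs _).trans_le ?_
        have hstep : ∀ i, (∑ l : (fs i).Leaves, (θs i l) ^ 2 / (α i * cs i l))
            = energy (cs i) (θs i) / α i := by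
          intro i
          rw [energy_eq, Finset.sum_div]
          exact Finset.sum_congr rfl fun l _ => div_mul_eq_div_div_swap _ _ _
        calc ∑ i, ∑ l : (fs i).Leaves, (θs i l) ^ 2 / (α i * cs i l)
            = ∑ i, energy (cs i) (θs i) / α i :=
              Finset.sum_congr rfl fun i _ => hstep i
          _ ≤ ∑ i, Real.sqrt (Fintype.card (fs i).Leaves) / α i := by
              refine Finset.sum_le_sum fun i _ => ?_
              have := hαpos i
              gcongr
              exact hen i
          _ = ∑ i, ((Fintype.card (fs i).Leaves : ℝ))
                / Real.sqrt (Fintype.card (Formula.and k fs).Leaves) := by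
              refine Finset.sum_congr rfl fun i _ => ?_
              rw [hα, div_div_eq_mul_div,
                Real.mul_self_sqrt (le_of_lt (hni i))]
          _ = ((Fintype.card (Formula.and k fs).Leaves : ℝ))
                / Real.sqrt (Fintype.card (Formula.and k fs).Leaves) := by
              rw [← Finset.sum_div, ← hnsum]
          _ = Real.sqrt (Fintype.card (Formula.and k fs).Leaves) := Real.div_sqrt
    · -- dual: parallel composition of duals
      intro x hx
      have h2 : ∃ i, (fs i).eval x = false := by
        by_contra hc
        push_neg at hc
        have hall : ∀ i, (fs i).eval x = true := by
          intro i
          cases h : (fs i).eval x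
          · exact absurd h (hc i)
          · rfl
        rw [(eval_and_iff fs x).mpr hall] at hx
        simp at hx
      obtain ⟨i, hi⟩ := h2
      obtain ⟨θ', hflow', hsupp', hen'⟩ := hdual i x hi
      simp only [dualF]
      refine ⟨fun e => Pi.single (M := fun j => (dualF (fs j)).Leaves → ℝ) i θ' e.1 e.2,
        isUnitFlow_or (fun j => dualF (fs j)) i θ' hflow', ?_, ?_⟩
      · rintro ⟨j, l'⟩ hl
        by_cases hji : j = i
        · subst hji
          simp only [Pi.single_eq_same]
          exact hsupp' l' hl
        · simp [Pi.single_eq_of_ne hji]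
      · have hEb : ∑ e : (Formula.or k fun j => dualF (fs j)).Leaves,
            (Pi.single (M := fun j => (dualF (fs j)).Leaves → ℝ) i θ' e.1 e.2) ^ 2 /
              (α e.1 * cs e.1 ((dEquiv (fs e.1)).symm e.2))⁻¹
            ≤ Real.sqrt (Fintype.card (Formula.and k fs).Leaves) := by
          refine (sum_leaves_or (fun j => dualF (fs j)) _).trans_le ?_
          rw [Fintype.sum_eq_single i (fun j hji => ?_)]
          swap
          · simp [Pi.single_eq_of_ne hji]
          simp only [Pi.single_eq_same]
          have hterm : ∀ l' : (dualF (fs i)).Leaves,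
              (θ' l') ^ 2 / (α i * cs i ((dEquiv (fs i)).symm l'))⁻¹
              = α i * ((θ' l') ^ 2 / (cs i ((dEquiv (fs i)).symm l'))⁻¹) := by
            intro l'
            simp only [div_eq_mul_inv, inv_inv, mul_inv]
            ring
          simp only [hterm]
          rw [← Finset.mul_sum]
          have hE' : (∑ l' : (dualF (fs i)).Leaves,
              (θ' l') ^ 2 / (cs i ((dEquiv (fs i)).symm l'))⁻¹)
              = energy (fun l' => (cs i ((dEquiv (fs i)).symm l'))⁻¹) θ' := rfl
          rw [hE']
          calc α i * energy (fun l' => (cs i ((dEquiv (fs i)).symm l'))⁻¹) θ'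
              ≤ α i * Real.sqrt (Fintype.card (fs i).Leaves) :=
                mul_le_mul_of_nonneg_left hen' (le_of_lt (hαpos i))
            _ = Real.sqrt (Fintype.card (Formula.and k fs).Leaves) := by
                rw [hα, div_mul_cancel₀ _ (ne_of_gt (hsq i))]
        exact le_of_eq_of_le rfl hEb
  | or k fs ih =>
    choose cs hcs hprim hdual using ih
    have hni : ∀ i, 0 < ((Fintype.card (fs i).Leaves : ℝ)) :=
      fun i => Nat.cast_pos.mpr (card_leaves_pos (fs i))
    have hnsum : ((Fintype.card (Formula.or k fs).Leaves : ℝ))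
        = ∑ i, ((Fintype.card (fs i).Leaves : ℝ)) := by
      rw [card_leaves_or]; push_cast; ring
    have hnpos : 0 < ((Fintype.card (Formula.or k fs).Leaves : ℝ)) :=
      Nat.cast_pos.mpr (card_leaves_pos _)
    have hsq : ∀ i, 0 < Real.sqrt (Fintype.card (fs i).Leaves) :=
      fun i => Real.sqrt_pos.2 (hni i)
    have hsqn : 0 < Real.sqrt (Fintype.card (Formula.or k fs).Leaves) :=
      Real.sqrt_pos.2 hnpos
    set α : Fin (k+1) → ℝ := fun i =>
      Real.sqrt (Fintype.card (fs i).Leaves)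
        / Real.sqrt (Fintype.card (Formula.or k fs).Leaves) with hα
    have hαpos : ∀ i, 0 < α i := fun i => div_pos (hsq i) hsqn
    refine ⟨fun e => α e.1 * cs e.1 e.2,
      fun e => mul_pos (hαpos e.1) (hcs e.1 e.2), ?_, ?_⟩
    · -- primal: parallel composition
      intro x hx
      obtain ⟨i, hi⟩ := (eval_or_iff fs x).mp hx
      obtain ⟨θ', hflow', hsupp', hen'⟩ := hprim i x hi
      refine ⟨fun e => Pi.single (M := fun j => (fs j).Leaves → ℝ) i θ' e.1 e.2,
        isUnitFlow_or fs i θ' hflow', ?_, ?_⟩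
      · rintro ⟨j, l⟩ hl
        by_cases hji : j = i
        · subst hji
          simp only [Pi.single_eq_same]
          exact hsupp' l hl
        · simp [Pi.single_eq_of_ne hji]
      · rw [energy_eq]
        refine (sum_leaves_or fs _).trans_le ?_
        rw [Fintype.sum_eq_single i (fun j hji => ?_)]
        swap
        · simp [Pi.single_eq_of_ne hji]
        simp only [Pi.single_eq_same]
        have hstep : (∑ l : (fs i).Leaves, (θ' l) ^ 2 / (α i * cs i l))
            = energy (cs i) θ' / α i := by
          rw [energy_eq, Finset.sum_div]
          exact Finset.sum_congr rfl fun l _ => div_mul_eq_div_div_swap _ _ _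
        rw [hstep]
        calc energy (cs i) θ' / α i
            ≤ Real.sqrt (Fintype.card (fs i).Leaves) / α i := by
              have h2' := hαpos i
              gcongr
          _ = Real.sqrt (Fintype.card (Formula.or k fs).Leaves) := by
              rw [hα, div_div_eq_mul_div, mul_comm, mul_div_assoc,
                div_self (ne_of_gt (hsq i)), mul_one]
    · -- dual: series composition of duals
      intro x hx
      have hall : ∀ i, (fs i).eval x = false := by
        intro i
        cases h : (fs i).eval x
        · rfl
        · exfalso
          rw [(eval_or_iff fs x).mpr ⟨i, h⟩] at hx
          simp at hx
      choose θs hflow hsupp hen using fun i => hdual i x (hall i)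
      simp only [dualF]
      refine ⟨fun e => θs e.1 e.2,
        isUnitFlow_and (fun j => dualF (fs j)) θs hflow, ?_, ?_⟩
      · rintro ⟨j, l'⟩ hl
        exact hsupp j l' hl
      · have hEb : ∑ e : (Formula.and k fun j => dualF (fs j)).Leaves,
            (θs e.1 e.2) ^ 2 /
              (α e.1 * cs e.1 ((dEquiv (fs e.1)).symm e.2))⁻¹
            ≤ Real.sqrt (Fintype.card (Formula.or k fs).Leaves) := by
          refine (sum_leaves_and (fun j => dualF (fs j)) _).trans_le ?_
          have hterm : ∀ (j : Fin (k+1)) (l' : (dualF (fs j)).Leaves),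
              (θs j l') ^ 2 / (α j * cs j ((dEquiv (fs j)).symm l'))⁻¹
              = α j * ((θs j l') ^ 2 / (cs j ((dEquiv (fs j)).symm l'))⁻¹) := by
            intro j l'
            simp only [div_eq_mul_inv, inv_inv, mul_inv]
            ring
          simp only [hterm]
          have hE' : ∀ j, (∑ l' : (dualF (fs j)).Leaves,
              α j * ((θs j l') ^ 2 / (cs j ((dEquiv (fs j)).symm l'))⁻¹))
              = α j * energy (fun l' => (cs j ((dEquiv (fs j)).symm l'))⁻¹) (θs j) := by
            intro j
            rw [← Finset.mul_sum]
            rfl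
          simp only [hE']
          calc ∑ j, α j * energy (fun l' => (cs j ((dEquiv (fs j)).symm l'))⁻¹) (θs j)
              ≤ ∑ j, α j * Real.sqrt (Fintype.card (fs j).Leaves) := by
                refine Finset.sum_le_sum fun j _ => ?_
                exact mul_le_mul_of_nonneg_left (hen j) (le_of_lt (hαpos j))
            _ = ∑ j, ((Fintype.card (fs j).Leaves : ℝ))
                  / Real.sqrt (Fintype.card (Formula.or k fs).Leaves) := by
                refine Finset.sum_congr rfl fun j _ => ?_
                rw [hα, div_mul_eq_mul_div,
                  Real.mul_self_sqrt (le_of_lt (hni j))]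
            _ = ((Fintype.card (Formula.or k fs).Leaves : ℝ))
                  / Real.sqrt (Fintype.card (Formula.or k fs).Leaves) := by
                rw [← Finset.sum_div, ← hnsum]
            _ = Real.sqrt (Fintype.card (Formula.or k fs).Leaves) := Real.div_sqrt
        exact le_of_eq_of_le rfl hEb

end Formula
end STConn

open scoped ENNReal in
open STConn Formula in
/-- For every read-once AND-OR formula `φ` on `N` variables there is a positive
weight function `c` on the edges of `G_φ` (with dual weights `c'(e†) = 1/c(e)`
on the edges of the dual graph `G'_φ`, realized as the graph of the De Morgan
dual formula) such that
`max_{φ(x)=1} R_{s,t}(G_φ(x),c) · max_{φ(x)=0} R_{s',t'}(G'_φ(x),c') ≤ 4N`,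
i.e. `W₊(P_{G_φ,c}) · W₋(P_{G_φ,c}) ≤ N`. -/
theorem stmt_13 {N : ℕ} (φ : Formula N) (hro : Function.Injective φ.label) :
    ∃ (c : φ.Leaves → ℝ) (c' : (dualF φ).Leaves → ℝ),
      (∀ e, 0 < c e) ∧ (∀ e', 0 < c' e') ∧
      (∀ (e : φ.Leaves) (e' : (dualF φ).Leaves),
        φ.label e = (dualF φ).label e' → c e * c' e' = 1) ∧
      (⨆ x : {x : Fin N → Bool // φ.eval x = true},
          effResOn φ.ends c {l | x.1 (φ.label l) = true} φ.src φ.snk) *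
      (⨆ x : {x : Fin N → Bool // φ.eval x = false},
          effResOn (dualF φ).ends c' {l | x.1 ((dualF φ).label l) = false}
            (dualF φ).src (dualF φ).snk)
        ≤ (4 * N : ℝ≥0∞) := by
  obtain ⟨c, hpos, hprim, hdual⟩ := key φ
  refine ⟨c, fun l' => (c ((dEquiv φ).symm l'))⁻¹, hpos,
    fun e' => inv_pos.2 (hpos _), ?_, ?_⟩
  · intro e e' hlab
    have h1 : φ.label ((dEquiv φ).symm e') = (dualF φ).label e' := label_dEquiv_symm φ e'
    have he : e = (dEquiv φ).symm e' := hro (hlab.trans h1.symm)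
    rw [he, mul_inv_cancel₀ (ne_of_gt (hpos _))]
  · have hb1 : (⨆ x : {x : Fin N → Bool // φ.eval x = true},
        effResOn φ.ends c {l | x.1 (φ.label l) = true} φ.src φ.snk)
        ≤ ENNReal.ofReal (Real.sqrt (Fintype.card φ.Leaves)) := by
      refine iSup_le fun x => ?_
      obtain ⟨θ, hf, hs, he⟩ := hprim x.1 x.2
      exact le_trans (effResOn_le_energy _ _ _ _ _ θ hf fun e h' => hs e h')
        (ENNReal.ofReal_le_ofReal he)
    have hb2 : (⨆ x : {x : Fin N → Bool // φ.eval x = false},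
        effResOn (dualF φ).ends (fun l' => (c ((dEquiv φ).symm l'))⁻¹)
          {l | x.1 ((dualF φ).label l) = false} (dualF φ).src (dualF φ).snk)
        ≤ ENNReal.ofReal (Real.sqrt (Fintype.card φ.Leaves)) := by
      refine iSup_le fun x => ?_
      obtain ⟨θ, hf, hs, he⟩ := hdual x.1 x.2
      exact le_trans (effResOn_le_energy _ _ _ _ _ θ hf fun e h' => hs e h')
        (ENNReal.ofReal_le_ofReal he)
    have hcard : Fintype.card φ.Leaves ≤ N := by
      have := Fintype.card_le_of_injective _ hro
      simpa using this
    calc _ ≤ ENNReal.ofReal (Real.sqrt (Fintype.card φ.Leaves)) *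
            ENNReal.ofReal (Real.sqrt (Fintype.card φ.Leaves)) := mul_le_mul' hb1 hb2
      _ = ENNReal.ofReal ((Fintype.card φ.Leaves : ℝ)) := by
          rw [← ENNReal.ofReal_mul (Real.sqrt_nonneg _),
            Real.mul_self_sqrt (Nat.cast_nonneg _)]
      _ = (Fintype.card φ.Leaves : ℝ≥0∞) := ENNReal.ofReal_natCast _
      _ ≤ (N : ℝ≥0∞) := by exact_mod_cast hcard
      _ = 1 * (N : ℝ≥0∞) := (one_mul _).symm
      _ ≤ 4 * (N : ℝ≥0∞) := mul_le_mul' (by norm_num) le_rfl
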